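/- Let q be any prime power. For a in F_q and b in F_q^*, the number of x in F_{q^2} satisfying a + Tr_{q^2/q}(x) + b·Norm_{q^2/q}(x) = 0 equals 1 if ab = 1, and equals q + 1 if ab ≠ 1. -/

import Mathlib

open scoped Classical
open Finset Polynomial

lemma aux_prim_root {E : Type*} [Field E] [Fintype E] {n : ℕ} (hn : 0 < n)
    (hdvd : n ∣ Fintype.card E - 1) : ∃ ζ : E, IsPrimitiveRoot ζ n := by
  classical
  obtain ⟨g, hg⟩ := IsCyclic.exists_generator (α := Eˣ)
  have hog : orderOf g = Fintype.card E - 1 := by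
    rw [orderOf_eq_card_of_forall_mem_zpowers hg, Nat.card_eq_fintype_card, Fintype.card_units]
  obtain ⟨m, hm⟩ := hdvd
  have hm0 : 0 < Fintype.card E - 1 := by
    have := Fintype.one_lt_card (α := E); omega
  have hmpos : 0 < m := by
    rcases Nat.eq_zero_or_pos m with h | h
    · rw [h, Nat.mul_zero] at hm; omega
    · exact h
  refine ⟨((g ^ m : Eˣ) : E), ?_⟩
  have h1 : orderOf ((g ^ m : Eˣ) : E) = n := by
    rw [orderOf_units, orderOf_pow, hog, hm]
    rw [Nat.gcd_eq_right ⟨n, by ring⟩, Nat.mul_div_cancel _ hmpos]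
  exact h1 ▸ IsPrimitiveRoot.orderOf _

lemma aux_count_pow {E : Type*} [Field E] [Fintype E] {n : ℕ} (hn : 0 < n)
    (hdvd : n ∣ Fintype.card E - 1) {c : E} (hc : c ≠ 0) (hpow : ∃ α : E, α ^ n = c) :
    (univ.filter fun y : E => y ^ n = c).card = n := by
  classical
  obtain ⟨α, hα⟩ := hpow
  have hαne : α ≠ 0 := by rintro rfl; exact hc (by simpa [zero_pow hn.ne'] using hα.symm)
  obtain ⟨ζ, hζ⟩ := aux_prim_root hn hdvd
  have hfil : (univ.filter fun y : E => y ^ n = c) = (nthRoots n c).toFinset := by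
    ext y
    simp [Polynomial.mem_nthRoots hn]
  rw [hfil, hζ.nthRoots_eq hα, ← Finset.range_val,
    ← Finset.image_val_of_injOn (hζ.injOn_pow_mul hαne), Finset.val_toFinset,
    Finset.card_image_of_injOn (hζ.injOn_pow_mul hαne), Finset.card_range]

lemma aux_exists_root {F E : Type*} [Field F] [Fintype F] [Field E] [Fintype E] [Algebra F E]
    (hcard : Fintype.card E = Fintype.card F ^ 2) {d : F} (hd : d ≠ 0) :
    ∃ α : E, α ^ (Fintype.card F + 1) = algebraMap F E d := by
  classical
  set q := Fintype.card F with hq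
  have hq2 : 2 ≤ q := Fintype.one_lt_card
  have hc : algebraMap F E d ≠ 0 := by
    simpa using (map_ne_zero_iff _ (algebraMap F E).injective).mpr hd
  have hpow1 : (algebraMap F E d) ^ (q - 1) = 1 := by
    rw [← map_pow, FiniteField.pow_card_sub_one_eq_one d hd, map_one]
  obtain ⟨g, hg⟩ := IsCyclic.exists_generator (α := Eˣ)
  have hog : orderOf g = Fintype.card E - 1 := by
    rw [orderOf_eq_card_of_forall_mem_zpowers hg, Nat.card_eq_fintype_card, Fintype.card_units]
  set u : Eˣ := Units.mk0 _ hc with hu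
  obtain ⟨k, hk⟩ := Subgroup.mem_zpowers_iff.mp (hg u)
  have hu1' : u ^ (q - 1) = 1 := by
    ext
    push_cast
    simpa [hu] using hpow1
  have hu1 : g ^ (k * ((q - 1 : ℕ) : ℤ)) = 1 := by
    rw [zpow_mul, hk, zpow_natCast, hu1']
  have hdvd : ((orderOf g : ℤ)) ∣ k * ((q - 1 : ℕ) : ℤ) := orderOf_dvd_iff_zpow_eq_one.mpr hu1
  rw [show (((q - 1 : ℕ)) : ℤ) = (q : ℤ) - 1 by push_cast [Nat.cast_sub (by omega : 1 ≤ q)]; ring] at hdvd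
  have hcast : ((orderOf g : ℤ)) = ((q : ℤ) + 1) * ((q : ℤ) - 1) := by
    rw [hog, hcard]
    have h1 : (1 : ℕ) ≤ q ^ 2 := Nat.one_le_pow _ _ (by omega)
    push_cast [Nat.cast_sub h1]
    ring
  have hq1 : ((q : ℤ) - 1) ≠ 0 := by
    have : (2 : ℤ) ≤ (q : ℤ) := by exact_mod_cast hq2
    omega
  have hdvd2 : ((q : ℤ) + 1) ∣ k := by
    rw [hcast] at hdvd
    exact (mul_dvd_mul_iff_right hq1).mp hdvd
  obtain ⟨j, hj⟩ := hdvd2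
  refine ⟨((g ^ j : Eˣ) : E), ?_⟩
  have : ((g ^ j) ^ (q + 1) : Eˣ) = u := by
    have hk2 : j * ((q + 1 : ℕ) : ℤ) = k := by push_cast [hj]; ring
    rw [← zpow_natCast, ← zpow_mul, hk2, hk]
  calc ((g ^ j : Eˣ) : E) ^ (q + 1) = (((g ^ j) ^ (q + 1) : Eˣ) : E) := by push_cast; ring
    _ = algebraMap F E d := by rw [this]; simp [hu]

theorem stmt2 {F E : Type*} [Field F] [Fintype F] [Field E] [Fintype E] [Algebra F E]
    (hcard : Fintype.card E = Fintype.card F ^ 2) (a b : F) (hb : b ≠ 0) :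
    (a * b = 1 →
      (univ.filter (fun x : E =>
        algebraMap F E a + (x + x ^ Fintype.card F) +
          algebraMap F E b * (x * x ^ Fintype.card F) = 0)).card = 1) ∧
    (a * b ≠ 1 →
      (univ.filter (fun x : E =>
        algebraMap F E a + (x + x ^ Fintype.card F) +
          algebraMap F E b * (x * x ^ Fintype.card F) = 0)).card
        = Fintype.card F + 1) := by
  classical
  set q := Fintype.card F with hq
  have hq2 : 2 ≤ q := Fintype.one_lt_card
  set φ := algebraMap F E with hφ
  have hB : φ b ≠ 0 := (map_ne_zero_iff _ (algebraMap F E).injective).mpr hb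
  -- characteristic
  haveI : CharP E (ringChar F) := charP_of_injective_algebraMap (algebraMap F E).injective _
  obtain ⟨n, hp, hcardF⟩ := FiniteField.card F (ringChar F)
  haveI := Fact.mk hp
  have hfrob : ∀ z : E, (z + 1 : E) ^ q = z ^ q + 1 := by
    intro z
    rw [← hq] at hcardF
    rw [hcardF, add_pow_char_pow, one_pow]
  have hBq : φ b ^ q = φ b := by rw [← map_pow, FiniteField.pow_card]
  -- the key equivalence
  have key : ∀ x : E, (φ a + (x + x ^ q) + φ b * (x * x ^ q) = 0) ↔
      ((φ b * x + 1) ^ (q + 1) = φ (1 - a * b)) := by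
    intro x
    have e1 : (φ b * x + 1) ^ (q + 1) = (φ b * x ^ q + 1) * (φ b * x + 1) := by
      rw [pow_succ, hfrob (φ b * x), mul_pow, hBq]
    have e2 : (φ b * x ^ q + 1) * (φ b * x + 1) - φ (1 - a * b)
        = φ b * (φ a + (x + x ^ q) + φ b * (x * x ^ q)) := by
      rw [map_sub, map_one, map_mul]; ring
    constructor
    · intro h
      rw [e1, ← sub_eq_zero, e2, h, mul_zero]
    · intro h
      rw [e1, ← sub_eq_zero, e2] at h
      exact (mul_eq_zero.mp h).resolve_left hB
  -- transfer the count via the bijection x ↦ φ b * x + 1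
  have hbij : (univ.filter (fun x : E =>
        φ a + (x + x ^ q) + φ b * (x * x ^ q) = 0)).card
      = (univ.filter fun y : E => y ^ (q + 1) = φ (1 - a * b)).card := by
    apply Finset.card_bij (fun x _ => φ b * x + 1)
    · intro x hx
      rw [Finset.mem_filter] at hx ⊢
      exact ⟨Finset.mem_univ _, (key x).mp hx.2⟩
    · intro x₁ _ x₂ _ h
      have := add_right_cancel h
      exact mul_left_cancel₀ hB this
    · intro y hy
      rw [Finset.mem_filter] at hy
      refine ⟨(y - 1) * (φ b)⁻¹, ?_, ?_⟩
      · rw [Finset.mem_filter]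
        refine ⟨Finset.mem_univ _, (key _).mpr ?_⟩
        have : φ b * ((y - 1) * (φ b)⁻¹) + 1 = y := by field_simp; ring
        rw [this]; exact hy.2
      · field_simp; ring
  rw [hbij]
  constructor
  · intro hab
    have h0 : φ (1 - a * b) = 0 := by rw [hab, sub_self, map_zero]
    rw [h0]
    have : (univ.filter fun y : E => y ^ (q + 1) = 0) = {0} := by
      ext y
      simp [pow_eq_zero_iff (n := q + 1) (by omega)]
    rw [this, Finset.card_singleton]
  · intro hab
    have hd : (1 : F) - a * b ≠ 0 := sub_ne_zero.mpr (Ne.symm hab)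
    apply aux_count_pow (by omega)
    · have h2 : Fintype.card E - 1 = (q + 1) * (q - 1) := by
        rw [hcard]
        simpa using Nat.sq_sub_sq q 1
      rw [h2]
      exact dvd_mul_right _ _
    · exact (map_ne_zero_iff _ (algebraMap F E).injective).mpr hd
    · exact aux_exists_root hcard hd
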